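/- Real-number version of the convergence theorem: let K_c ≥ 0, r ≥ 0, ρ ∈ [−1,1], and suppose for each n the quantities C(T/n) ≥ 0 and γ(T/n) satisfy |γ(T/n)/3| ≤ √(K_c C(T/n)), with K_d(T/n) = K_c + r²T/n − r K_c T/n + C(T/n)/4 − ρ γ(T/n)/3. If C(T/n) → 0 as n → ∞, then K_d(T/n) → K_c. -/

import Mathlib

/-- Convergence (real-number version): if `C(T/n) ≥ 0`, `|γ(T/n)/3| ≤ √(K_c C(T/n))`,
`K_d(T/n) = K_c + r²T/n - r K_c T/n + C(T/n)/4 - ρ γ(T/n)/3` and `C(T/n) → 0`,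
then `K_d(T/n) → K_c`. -/
theorem stmt_12 (T Kc r ρ : ℝ) (hT : 0 < T) (hKc : 0 ≤ Kc) (hr : 0 ≤ r)
    (hρ : ρ ∈ Set.Icc (-1:ℝ) 1)
    (C γ Kd : ℕ → ℝ)
    (hCpos : ∀ n, 0 ≤ C n)
    (hγ : ∀ n, |γ n / 3| ≤ Real.sqrt (Kc * C n))
    (hKd : ∀ n : ℕ, Kd n = Kc + r^2*(T/n) - r*Kc*(T/n) + C n/4 - ρ * γ n/3)
    (hC0 : Filter.Tendsto C Filter.atTop (nhds 0)) :
    Filter.Tendsto Kd Filter.atTop (nhds Kc) := by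
  have h1 : Filter.Tendsto (fun n : ℕ => T / n) Filter.atTop (nhds 0) :=
    tendsto_const_div_atTop_nhds_zero_nat T
  have hsq : Filter.Tendsto (fun n => Real.sqrt (Kc * C n)) Filter.atTop (nhds 0) := by
    have : Filter.Tendsto (fun n => Kc * C n) Filter.atTop (nhds (Kc * 0)) :=
      hC0.const_mul Kc
    rw [mul_zero] at this
    simpa [Function.comp_def] using (Real.continuous_sqrt.continuousAt.tendsto.comp this)
  have hγ0 : Filter.Tendsto (fun n => ρ * γ n / 3) Filter.atTop (nhds 0) := by
    refine squeeze_zero_norm ?_ hsq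
    intro n
    have : |ρ * γ n / 3| = |ρ| * |γ n / 3| := by
      rw [mul_div_assoc, abs_mul]
    rw [Real.norm_eq_abs, this]
    calc |ρ| * |γ n / 3| ≤ 1 * |γ n / 3| := by
          apply mul_le_mul_of_nonneg_right _ (abs_nonneg _)
          exact abs_le.mpr ⟨hρ.1, hρ.2⟩
      _ = |γ n / 3| := one_mul _
      _ ≤ Real.sqrt (Kc * C n) := hγ n
  have : Filter.Tendsto
      (fun n : ℕ => Kc + r^2*(T/n) - r*Kc*(T/n) + C n/4 - ρ * γ n/3)
      Filter.atTop (nhds (Kc + r^2*0 - r*Kc*0 + 0/4 - 0)) := by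
    exact ((((tendsto_const_nhds.add (h1.const_mul (r^2))).sub
      (h1.const_mul (r*Kc))).add (hC0.div_const 4)).sub hγ0)
  simp only [mul_zero, zero_div, sub_zero, add_zero] at this
  exact this.congr (fun n => (hKd n).symm)
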